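/- arXiv:1112.1764 — 2 statements merged into one kernel-verified Lean document; each statement's English description precedes it below -/
import Mathlib

section
/- In the group G = ⟨a,b,t,u | [a,b],[a,u],[t,b],[t,u], a^t = a², b^u = b²⟩ (the direct square of BS(1,2)), the subgroup H = ⟨a, b, tu^{-1}⟩ is normal and G/H is infinite cyclic. -/
open scoped commutatorElement

/-- The relators of `⟨a,b,t,u ∣ [a,b],[a,u],[t,b],[t,u], aᵗ = a², bᵘ = b²⟩`, the direct
square of `BS(1,2)`; generators `0 = a`, `1 = b`, `2 = t`, `3 = u`. -/
def bsRels : Set (FreeGroup (Fin 4)) :=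
  { ⁅FreeGroup.of (0 : Fin 4), FreeGroup.of (1 : Fin 4)⁆, ⁅FreeGroup.of (0 : Fin 4), FreeGroup.of (3 : Fin 4)⁆,
    ⁅FreeGroup.of (2 : Fin 4), FreeGroup.of (1 : Fin 4)⁆, ⁅FreeGroup.of (2 : Fin 4), FreeGroup.of (3 : Fin 4)⁆,
    (FreeGroup.of (2 : Fin 4))⁻¹ * FreeGroup.of (0 : Fin 4) * FreeGroup.of (2 : Fin 4) *
      (FreeGroup.of (0 : Fin 4) * FreeGroup.of (0 : Fin 4))⁻¹,
    (FreeGroup.of (3 : Fin 4))⁻¹ * FreeGroup.of (1 : Fin 4) * FreeGroup.of (3 : Fin 4) *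
      (FreeGroup.of (1 : Fin 4) * FreeGroup.of (1 : Fin 4))⁻¹ }

namespace BsAux

abbrev G := PresentedGroup bsRels

noncomputable abbrev A : G := PresentedGroup.of 0
noncomputable abbrev B : G := PresentedGroup.of 1
noncomputable abbrev T : G := PresentedGroup.of 2
noncomputable abbrev U : G := PresentedGroup.of 3

lemma relOne {r : FreeGroup (Fin 4)} (h : r ∈ bsRels) : PresentedGroup.mk bsRels r = 1 :=
  (QuotientGroup.eq_one_iff _).2 (Subgroup.subset_normalClosure h)

lemma cAB : Commute A B := by
  have h := relOne (show ⁅FreeGroup.of (0 : Fin 4), FreeGroup.of (1 : Fin 4)⁆ ∈ bsRels by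
    simp [bsRels])
  rw [map_commutatorElement] at h
  exact commutatorElement_eq_one_iff_commute.mp h

lemma cAU : Commute A U := by
  have h := relOne (show ⁅FreeGroup.of (0 : Fin 4), FreeGroup.of (3 : Fin 4)⁆ ∈ bsRels by
    simp [bsRels])
  rw [map_commutatorElement] at h
  exact commutatorElement_eq_one_iff_commute.mp h

lemma cTB : Commute T B := by
  have h := relOne (show ⁅FreeGroup.of (2 : Fin 4), FreeGroup.of (1 : Fin 4)⁆ ∈ bsRels by
    simp [bsRels])
  rw [map_commutatorElement] at h
  exact commutatorElement_eq_one_iff_commute.mp h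

lemma cTU : Commute T U := by
  have h := relOne (show ⁅FreeGroup.of (2 : Fin 4), FreeGroup.of (3 : Fin 4)⁆ ∈ bsRels by
    simp [bsRels])
  rw [map_commutatorElement] at h
  exact commutatorElement_eq_one_iff_commute.mp h

lemma relA : T⁻¹ * A * T = A * A := by
  have h := relOne (show (FreeGroup.of (2 : Fin 4))⁻¹ * FreeGroup.of (0 : Fin 4) *
      FreeGroup.of (2 : Fin 4) * (FreeGroup.of (0 : Fin 4) * FreeGroup.of (0 : Fin 4))⁻¹ ∈ bsRels
    by simp [bsRels])
  simp only [map_mul, map_inv] at h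
  exact mul_inv_eq_one.mp h

lemma relB : U⁻¹ * B * U = B * B := by
  have h := relOne (show (FreeGroup.of (3 : Fin 4))⁻¹ * FreeGroup.of (1 : Fin 4) *
      FreeGroup.of (3 : Fin 4) * (FreeGroup.of (1 : Fin 4) * FreeGroup.of (1 : Fin 4))⁻¹ ∈ bsRels
    by simp [bsRels])
  simp only [map_mul, map_inv] at h
  exact mul_inv_eq_one.mp h

lemma conj_eq_of_commute {g s : G} (h : Commute g s) : g * s * g⁻¹ = s := by
  rw [h.eq]; group

noncomputable abbrev Sset : Set G := {A, B, T * U⁻¹}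

noncomputable abbrev N : Subgroup G := Subgroup.closure Sset

lemma hA : A ∈ N := Subgroup.subset_closure (by simp)
lemma hB : B ∈ N := Subgroup.subset_closure (by simp)
lemma hz : T * U⁻¹ ∈ N := Subgroup.subset_closure (by simp)

lemma conjN (g : G) (hg : ∀ s ∈ Sset, g * s * g⁻¹ ∈ N) : ∀ n ∈ N, g * n * g⁻¹ ∈ N := by
  intro n hn
  induction hn using Subgroup.closure_induction with
  | mem x hx => exact hg x hx
  | one =>
      have : g * 1 * g⁻¹ = 1 := by group
      rw [this]; exact one_mem N
  | mul x y hx hy ihx ihy =>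
      have : g * (x * y) * g⁻¹ = (g * x * g⁻¹) * (g * y * g⁻¹) := by group
      rw [this]; exact mul_mem ihx ihy
  | inv x hx ih =>
      have : g * x⁻¹ * g⁻¹ = (g * x * g⁻¹)⁻¹ := by group
      rw [this]; exact inv_mem ih

/-- Conjugations of the three generators of `N` by the four generators of `G`. -/
lemma gen_conj (j : Fin 4) :
    (∀ s ∈ Sset, PresentedGroup.of (rels := bsRels) j * s * (PresentedGroup.of j)⁻¹ ∈ N) ∧
    (∀ s ∈ Sset, (PresentedGroup.of (rels := bsRels) j)⁻¹ * s * PresentedGroup.of j ∈ N) := by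
  have memconj : ∀ g ∈ N, ∀ s ∈ N, g * s * g⁻¹ ∈ N := fun g hg s hs =>
    mul_mem (mul_mem hg hs) (inv_mem hg)
  have hSN : ∀ s ∈ Sset, s ∈ N := fun s hs => Subgroup.subset_closure hs
  fin_cases j
  · exact ⟨fun s hs => memconj A hA s (hSN s hs),
      fun s hs => memconj A⁻¹ (inv_mem hA) s (hSN s hs)⟩
  · exact ⟨fun s hs => memconj B hB s (hSN s hs),
      fun s hs => memconj B⁻¹ (inv_mem hB) s (hSN s hs)⟩
  · -- conjugation by T
    constructor
    · rintro s (rfl | rfl | rfl)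
      · -- T * A * T⁻¹ = z * A * z⁻¹
        show T * A * T⁻¹ ∈ N
        have e : T * A * T⁻¹ = (T * U⁻¹) * A * (T * U⁻¹)⁻¹ := by
          rw [mul_inv_rev, inv_inv, mul_assoc T U⁻¹ A, (cAU.inv_right.symm).eq]
          group
        rw [e]; exact mul_mem (mul_mem hz hA) (inv_mem hz)
      · show T * B * T⁻¹ ∈ N
        rw [conj_eq_of_commute cTB]; exact hB
      · have cTz : Commute T (T * U⁻¹) := (Commute.refl T).mul_right cTU.inv_right
        show T * (T * U⁻¹) * T⁻¹ ∈ N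
        rw [conj_eq_of_commute cTz]; exact hz
    · rintro s (rfl | rfl | rfl)
      · show T⁻¹ * A * T ∈ N
        rw [relA]; exact mul_mem hA hA
      · show T⁻¹ * B * T⁻¹⁻¹ ∈ N
        rw [conj_eq_of_commute cTB.inv_left]; exact hB
      · have cTz : Commute T⁻¹ (T * U⁻¹) :=
          ((Commute.refl T).mul_right cTU.inv_right).inv_left
        show T⁻¹ * (T * U⁻¹) * T⁻¹⁻¹ ∈ N
        rw [conj_eq_of_commute cTz]; exact hz
  · -- conjugation by U
    have cUz : Commute U (T * U⁻¹) := cTU.symm.mul_right (Commute.refl U).inv_right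
    constructor
    · rintro s (rfl | rfl | rfl)
      · show U * A * U⁻¹ ∈ N
        rw [conj_eq_of_commute cAU.symm]; exact hA
      · -- U * B * U⁻¹ = z⁻¹ * B * z
        show U * B * U⁻¹ ∈ N
        have e : U * B * U⁻¹ = (T * U⁻¹)⁻¹ * B * (T * U⁻¹) := by
          rw [mul_inv_rev, inv_inv, mul_assoc U T⁻¹ B, (cTB.inv_left).eq]
          group
        rw [e]; exact mul_mem (mul_mem (inv_mem hz) hB) hz
      · show U * (T * U⁻¹) * U⁻¹ ∈ N
        rw [conj_eq_of_commute cUz]; exact hz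
    · rintro s (rfl | rfl | rfl)
      · show U⁻¹ * A * U⁻¹⁻¹ ∈ N
        rw [conj_eq_of_commute cAU.symm.inv_left]; exact hA
      · show U⁻¹ * B * U ∈ N
        rw [relB]; exact mul_mem hB hB
      · show U⁻¹ * (T * U⁻¹) * U⁻¹⁻¹ ∈ N
        rw [conj_eq_of_commute cUz.inv_left]; exact hz

lemma normalN : N.Normal := by
  -- the set of elements all of whose conjugations preserve N is a subgroup
  let K : Subgroup G :=
    { carrier := {g : G | (∀ n ∈ N, g * n * g⁻¹ ∈ N) ∧ (∀ n ∈ N, g⁻¹ * n * g ∈ N)}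
      one_mem' := by
        constructor <;> intro n hn <;> simpa using hn
      mul_mem' := by
        rintro x y ⟨hx1, hx2⟩ ⟨hy1, hy2⟩
        constructor
        · intro n hn
          have : x * y * n * (x * y)⁻¹ = x * (y * n * y⁻¹) * x⁻¹ := by group
          rw [this]; exact hx1 _ (hy1 n hn)
        · intro n hn
          have : (x * y)⁻¹ * n * (x * y) = y⁻¹ * (x⁻¹ * n * x) * y := by group
          rw [this]; exact hy2 _ (hx2 n hn)
      inv_mem' := by
        rintro x ⟨hx1, hx2⟩
        refine ⟨fun n hn => by simpa using hx2 n hn, fun n hn => ?_⟩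
        simpa using hx1 n hn }
  have hall : ∀ g : G, g ∈ K := by
    intro g
    refine PresentedGroup.generated_by bsRels K ?_ g
    intro j
    exact ⟨conjN _ (gen_conj j).1, conjN _ (gen_conj j).2⟩
  exact ⟨fun n hn g => (hall g).1 n hn⟩

noncomputable def φ : Fin 4 → Multiplicative ℤ :=
  ![1, 1, Multiplicative.ofAdd 1, Multiplicative.ofAdd 1]

lemma relφ : ∀ r ∈ bsRels, FreeGroup.lift φ r = 1 := by
  intro r hr
  simp only [bsRels, Set.mem_insert_iff, Set.mem_singleton_iff] at hr
  rcases hr with rfl | rfl | rfl | rfl | rfl | rfl <;>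
    simp [map_commutatorElement, commutatorElement_eq_one_iff_commute, φ, mul_comm]

noncomputable def f : G →* Multiplicative ℤ := PresentedGroup.toGroup relφ

lemma fA : f A = 1 := by simp [f, φ]
lemma fB : f B = 1 := by simp [f, φ]
lemma fT : f T = Multiplicative.ofAdd 1 := by simp [f, φ]
lemma fU : f U = Multiplicative.ofAdd 1 := by simp [f, φ]

end BsAux

/-- In `G = ⟨a,b,t,u ∣ [a,b],[a,u],[t,b],[t,u], aᵗ = a², bᵘ = b²⟩` (the direct square of
`BS(1,2)`), the subgroup `H = ⟨a, b, tu⁻¹⟩` is normal with infinite cyclic quotient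
(expressed by `H` being the kernel of a surjection onto `ℤ`). -/
theorem bs_square_subgroup_normal_infinite_cyclic_quotient :
    (Subgroup.closure {PresentedGroup.of (rels := bsRels) 0, PresentedGroup.of 1,
        PresentedGroup.of 2 * (PresentedGroup.of 3)⁻¹}).Normal ∧
    ∃ f : PresentedGroup bsRels →* Multiplicative ℤ, Function.Surjective f ∧
      f.ker = Subgroup.closure {PresentedGroup.of (rels := bsRels) 0, PresentedGroup.of 1,
        PresentedGroup.of 2 * (PresentedGroup.of 3)⁻¹} := by
  open BsAux in
  refine ⟨normalN, f, ?_, ?_⟩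
  · intro y
    refine ⟨T ^ (Multiplicative.toAdd y), ?_⟩
    rw [map_zpow, fT]
    rw [← ofAdd_zsmul]
    simp
  · letI : N.Normal := normalN
    apply le_antisymm
    · -- ker f ≤ N
      intro x hx
      have key : ((zpowersHom (G ⧸ N) (QuotientGroup.mk' N T)).comp f) = QuotientGroup.mk' N := by
        apply PresentedGroup.ext
        intro i
        fin_cases i
        · rw [MonoidHom.comp_apply]
          rw [show f (PresentedGroup.of (rels := bsRels) ⟨0, by norm_num⟩) = 1 from fA]
          rw [map_one]
          exact ((QuotientGroup.eq_one_iff _).2 hA).symm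
        · rw [MonoidHom.comp_apply]
          rw [show f (PresentedGroup.of (rels := bsRels) ⟨1, by norm_num⟩) = 1 from fB]
          rw [map_one]
          exact ((QuotientGroup.eq_one_iff _).2 hB).symm
        · rw [MonoidHom.comp_apply]
          rw [show f (PresentedGroup.of (rels := bsRels) ⟨2, by norm_num⟩) =
            Multiplicative.ofAdd 1 from fT]
          rw [zpowersHom_apply]
          simp
        · rw [MonoidHom.comp_apply]
          rw [show f (PresentedGroup.of (rels := bsRels) ⟨3, by norm_num⟩) =
            Multiplicative.ofAdd 1 from fU]
          rw [zpowersHom_apply]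
          have h1 : (QuotientGroup.mk' N) (T * U⁻¹) = 1 := (QuotientGroup.eq_one_iff _).2 hz
          rw [map_mul, map_inv, mul_inv_eq_one] at h1
          simpa using h1
      have := DFunLike.congr_fun key x
      rw [MonoidHom.comp_apply] at this
      rw [MonoidHom.mem_ker] at hx
      rw [hx, map_one] at this
      exact (QuotientGroup.eq_one_iff x).1 this.symm
    · -- N ≤ ker f
      rw [Subgroup.closure_le]
      rintro s (rfl | rfl | rfl)
      · exact fA
      · exact fB
      · rw [SetLike.mem_coe, MonoidHom.mem_ker, map_mul, map_inv, fT, fU]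
        simp
end

section
/- The kernel of the homomorphism F₂ × F₂ → ℤ sending each of the four standard generators to 1 is finitely generated but not finitely presented. -/
/-- `G` is finitely presented. -/
def IsFinitelyPresentedGroup (G : Type*) [Group G] : Prop :=
  ∃ (n : ℕ) (R : Finset (FreeGroup (Fin n))),
    Nonempty (G ≃* FreeGroup (Fin n) ⧸
      Subgroup.normalClosure (R : Set (FreeGroup (Fin n))))

/-- The homomorphism `F₂ × F₂ → ℤ` sending each of the four standard generators to `1`. -/
def stallingsMap : FreeGroup Bool × FreeGroup Bool →* Multiplicative ℤ :=
  ((FreeGroup.lift fun _ : Bool => Multiplicative.ofAdd (1 : ℤ)).comp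
      (MonoidHom.fst (FreeGroup Bool) (FreeGroup Bool))) *
    ((FreeGroup.lift fun _ : Bool => Multiplicative.ofAdd (1 : ℤ)).comp
      (MonoidHom.snd (FreeGroup Bool) (FreeGroup Bool)))

namespace StallingsAux

theorem mem_normalClosure_finite {G : Type*} [Group G] {R : Set G} {z : G}
    (hz : z ∈ Subgroup.normalClosure R) :
    ∃ T : Finset G, ↑T ⊆ R ∧ z ∈ Subgroup.normalClosure (T : Set G) := by
  classical
  let S : Subgroup G :=
  { carrier := {z | ∃ T : Finset G, ↑T ⊆ R ∧ z ∈ Subgroup.normalClosure (T : Set G)}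
    one_mem' := ⟨∅, by simp, one_mem _⟩
    mul_mem' := by
      rintro x y ⟨T₁, hT₁, hx⟩ ⟨T₂, hT₂, hy⟩
      refine ⟨T₁ ∪ T₂, ?_, mul_mem ?_ ?_⟩
      · rw [Finset.coe_union]; exact Set.union_subset hT₁ hT₂
      · exact Subgroup.normalClosure_mono (by rw [Finset.coe_union]; exact Set.subset_union_left) hx
      · exact Subgroup.normalClosure_mono (by rw [Finset.coe_union]; exact Set.subset_union_right) hy
    inv_mem' := by
      rintro x ⟨T, hT, hx⟩
      exact ⟨T, hT, inv_mem hx⟩ }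
  have hS : S.Normal := by
    constructor
    rintro x ⟨T, hT, hx⟩ g
    exact ⟨T, hT, Subgroup.normalClosure_normal.conj_mem x hx g⟩
  exact Subgroup.normalClosure_le_normal (N := S)
    (fun r hr => ⟨{r}, by simpa using hr, Subgroup.subset_normalClosure (by simp)⟩) hz

theorem exists_finset_normalClosure {B : Type*} [Fintype B] {G : Type*} [Group G]
    (hG : IsFinitelyPresentedGroup G)
    (π : FreeGroup B →* G) (hsurj : Function.Surjective π)
    {R : Set (FreeGroup B)} (hker : π.ker = Subgroup.normalClosure R) :
    ∃ T : Finset (FreeGroup B), ↑T ⊆ R ∧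
      Subgroup.normalClosure (T : Set (FreeGroup B)) = π.ker := by
  classical
  obtain ⟨n, Rel, ⟨e⟩⟩ := hG
  set q : FreeGroup (Fin n) →* G :=
    (e.symm.toMonoidHom).comp (QuotientGroup.mk' (Subgroup.normalClosure (Rel : Set (FreeGroup (Fin n)))))
    with hq_def
  have hq_surj : Function.Surjective q :=
    e.symm.surjective.comp (QuotientGroup.mk'_surjective _)
  have hq_ker : q.ker = Subgroup.normalClosure (Rel : Set (FreeGroup (Fin n))) := by
    ext w
    simp only [hq_def, MonoidHom.mem_ker, MonoidHom.comp_apply, MulEquiv.coe_toMonoidHom]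
    rw [MulEquiv.map_eq_one_iff]
    exact QuotientGroup.eq_one_iff w
  set α : FreeGroup (Fin n) →* FreeGroup B :=
    FreeGroup.lift (fun i => Function.surjInv hsurj (q (FreeGroup.of i))) with hα_def
  have hπα : ∀ w, π (α w) = q w := by
    intro w
    have : π.comp α = q := FreeGroup.ext_hom _ _ (fun i => by
      simp [hα_def, Function.surjInv_eq hsurj])
    exact DFunLike.congr_fun this w
  set β : FreeGroup B →* FreeGroup (Fin n) :=
    FreeGroup.lift (fun g => Function.surjInv hq_surj (π (FreeGroup.of g))) with hβ_def
  have hqβ : ∀ w, q (β w) = π w := by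
    intro w
    have : q.comp β = π := FreeGroup.ext_hom _ _ (fun g => by
      simp [hβ_def, Function.surjInv_eq hq_surj])
    exact DFunLike.congr_fun this w
  -- finite pieces
  have hrel : ∀ s : (Rel : Finset (FreeGroup (Fin n))), (α s : FreeGroup B) ∈ Subgroup.normalClosure R := by
    rintro ⟨s, hs⟩
    rw [← hker]
    have : q s = 1 := by
      rw [← MonoidHom.mem_ker, hq_ker]
      exact Subgroup.subset_normalClosure hs
    simp [MonoidHom.mem_ker, hπα, this]
  have hgen : ∀ g : B, (FreeGroup.of g)⁻¹ * α (β (FreeGroup.of g)) ∈ Subgroup.normalClosure R := by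
    intro g
    rw [← hker]
    simp [MonoidHom.mem_ker, hπα, hqβ]
  choose Ts hTs hTs' using fun s => mem_normalClosure_finite (hrel s)
  choose Tg hTg hTg' using fun g => mem_normalClosure_finite (hgen g)
  set R₀ : Set (FreeGroup B) := (⋃ s, ↑(Ts s)) ∪ ⋃ g, ↑(Tg g) with hR₀_def
  have hR₀R : R₀ ⊆ R := by
    apply Set.union_subset <;> exact Set.iUnion_subset (fun i => by first | exact hTs i | exact hTg i)
  have hR₀fin : R₀.Finite :=
    (Set.finite_iUnion (fun s => (Ts s).finite_toSet)).union
      (Set.finite_iUnion (fun g => (Tg g).finite_toSet))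
  set C := Subgroup.normalClosure R₀ with hC_def
  have hTsC : ∀ s, (Ts s : Set (FreeGroup B)) ⊆ C := fun s x hx =>
    Subgroup.subset_normalClosure (Set.mem_union_left _ (Set.mem_iUnion.2 ⟨s, hx⟩))
  have hTgC : ∀ g, (Tg g : Set (FreeGroup B)) ⊆ C := fun g x hx =>
    Subgroup.subset_normalClosure (Set.mem_union_right _ (Set.mem_iUnion.2 ⟨g, hx⟩))
  have hαC : ∀ w ∈ Subgroup.normalClosure (Rel : Set (FreeGroup (Fin n))), α w ∈ C := by
    intro w hw
    have hcomap : (C.comap α).Normal := Subgroup.Normal.comap (by rw [hC_def]; exact Subgroup.normalClosure_normal) α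
    refine Subgroup.normalClosure_le_normal (N := C.comap α) ?_ hw
    rintro s hs
    exact Subgroup.normalClosure_le_normal (hTsC ⟨s, hs⟩) (hTs' ⟨s, hs⟩)
  have hCn : C.Normal := by rw [hC_def]; exact Subgroup.normalClosure_normal
  have hθ : ∀ w : FreeGroup B, w⁻¹ * α (β w) ∈ C := by
    let D : Subgroup (FreeGroup B) :=
    { carrier := {w | w⁻¹ * α (β w) ∈ C}
      one_mem' := by simp [one_mem]
      mul_mem' := by
        intro u v hu hv
        have h1 : (u * v)⁻¹ * α (β (u * v)) =
            (v⁻¹ * (u⁻¹ * α (β u)) * v) * (v⁻¹ * α (β v)) := by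
          simp only [map_mul]
          group
        show (u * v)⁻¹ * α (β (u * v)) ∈ C
        rw [h1]
        exact mul_mem (hCn.conj_mem' _ hu v) hv
      inv_mem' := by
        intro u hu
        have h1 : (u⁻¹)⁻¹ * α (β u⁻¹) = u * (u⁻¹ * α (β u))⁻¹ * u⁻¹ := by
          simp only [map_inv]
          group
        rw [Set.mem_setOf_eq, h1]
        exact hCn.conj_mem _ (inv_mem hu) u }
    have hD : D = ⊤ := by
      rw [eq_top_iff, ← FreeGroup.closure_range_of, Subgroup.closure_le]
      rintro _ ⟨g, rfl⟩
      exact Subgroup.normalClosure_le_normal (hTgC g) (hTg' g)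
    intro w
    have := hD ▸ Subgroup.mem_top w
    exact this
  refine ⟨hR₀fin.toFinset, by simpa using hR₀R, ?_⟩
  have hcoe : (hR₀fin.toFinset : Set (FreeGroup B)) = R₀ := hR₀fin.coe_toFinset
  rw [hcoe]
  apply le_antisymm
  · rw [← hC_def]
    apply Subgroup.normalClosure_le_normal
    intro x hx
    show x ∈ π.ker
    rw [hker]
    exact Subgroup.subset_normalClosure (hR₀R hx)
  · intro w hw
    have hβw : β w ∈ Subgroup.normalClosure (Rel : Set (FreeGroup (Fin n))) := by
      rw [← hq_ker, MonoidHom.mem_ker, hqβ]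
      exact hw
    have h1 : α (β w) ∈ C := hαC _ hβw
    have h2 : (α (β w))⁻¹ * w ∈ C := by
      have := inv_mem (hθ w)
      simpa [mul_inv_rev] using this
    have : α (β w) * ((α (β w))⁻¹ * w) ∈ C := mul_mem h1 h2
    simpa using this

end StallingsAux


namespace StallingsAux

open SemidirectProduct

abbrev A := FreeGroup Bool

def aa : A := FreeGroup.of true
def bb : A := FreeGroup.of false
def cc : A := bb * aa⁻¹

def sigma : A →* Multiplicative ℤ := FreeGroup.lift fun _ => Multiplicative.ofAdd (1 : ℤ)

@[simp] lemma sigma_aa : sigma aa = Multiplicative.ofAdd (1 : ℤ) := by simp [sigma, aa]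
@[simp] lemma sigma_bb : sigma bb = Multiplicative.ofAdd (1 : ℤ) := by simp [sigma, bb]
@[simp] lemma sigma_cc : sigma cc = 1 := by
  simp [cc]

def shiftAut : Multiplicative ℤ →* MulAut (FreeGroup ℤ) where
  toFun g := (FreeGroup.freeGroupCongr (Equiv.addRight g.toAdd))
  map_one' := by
    show FreeGroup.freeGroupCongr (Equiv.addRight ((1 : Multiplicative ℤ).toAdd)) = 1
    have h0 : Equiv.addRight ((1 : Multiplicative ℤ).toAdd) = Equiv.refl ℤ := by
      ext x; simp
    rw [h0, FreeGroup.freeGroupCongr_refl]; rfl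
  map_mul' g h := by
    show FreeGroup.freeGroupCongr (Equiv.addRight ((g * h).toAdd)) = _
    have he : Equiv.addRight ((g * h).toAdd)
        = (Equiv.addRight h.toAdd).trans (Equiv.addRight g.toAdd) := by
      ext x
      simp only [Equiv.trans_apply, Equiv.coe_addRight, toAdd_mul]
      ring
    rw [he, ← FreeGroup.freeGroupCongr_trans]
    rfl

@[simp] lemma shiftAut_of (g : Multiplicative ℤ) (n : ℤ) :
    shiftAut g (FreeGroup.of n) = FreeGroup.of (n + g.toAdd) := by
  simp [shiftAut]

abbrev W := SemidirectProduct (FreeGroup ℤ) (Multiplicative ℤ) shiftAut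

def rho : FreeGroup ℤ →* A := FreeGroup.lift fun n => aa ^ n * cc * aa ^ (-n)

@[simp] lemma rho_of (n : ℤ) : rho (FreeGroup.of n) = aa ^ n * cc * aa ^ (-n) := by
  simp [rho]

def Phi : A →* W := FreeGroup.lift fun s =>
  if s then inr (Multiplicative.ofAdd (1 : ℤ))
  else inl (FreeGroup.of (0 : ℤ)) * inr (Multiplicative.ofAdd (1 : ℤ))

@[simp] lemma Phi_aa : Phi aa = inr (Multiplicative.ofAdd (1 : ℤ)) := by simp [Phi, aa]
@[simp] lemma Phi_bb :
    Phi bb = inl (FreeGroup.of (0 : ℤ)) * inr (Multiplicative.ofAdd (1 : ℤ)) := by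
  simp [Phi, bb]

lemma Phi_cc : Phi cc = inl (FreeGroup.of (0 : ℤ)) := by
  simp [cc, mul_assoc]

def Psi : W →* A :=
  SemidirectProduct.lift rho (zpowersHom A aa) (by
    intro g
    apply FreeGroup.ext_hom
    intro n
    simp only [MonoidHom.comp_apply, MulEquiv.coe_toMonoidHom, shiftAut_of, rho_of,
      MulAut.conj_apply, zpowersHom_apply]
    rw [zpow_add]
    group)

@[simp] lemma Psi_inl (u : FreeGroup ℤ) : Psi (inl u) = rho u := by simp [Psi]
@[simp] lemma Psi_inr (g : Multiplicative ℤ) : Psi (inr g) = aa ^ g.toAdd := by simp [Psi]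

lemma Psi_Phi (u : A) : Psi (Phi u) = u := by
  have : Psi.comp Phi = MonoidHom.id A := by
    apply FreeGroup.ext_hom
    intro s
    cases s
    · show Psi (Phi bb) = bb
      rw [Phi_bb, _root_.map_mul, Psi_inl, Psi_inr, rho_of]
      simp only [toAdd_ofAdd, zpow_zero, neg_zero, one_mul, mul_one, zpow_one, cc]
      group
    · show Psi (Phi aa) = aa
      rw [Phi_aa, Psi_inr]
      simp
  exact DFunLike.congr_fun this u

lemma Phi_rho (u : FreeGroup ℤ) : Phi (rho u) = inl u := by
  have : Phi.comp rho = (inl : FreeGroup ℤ →* W) := by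
    apply FreeGroup.ext_hom
    intro n
    have hpow : ∀ m : ℤ, (inr (Multiplicative.ofAdd (1:ℤ)) : W) ^ m
        = inr (Multiplicative.ofAdd m) := by
      intro m
      rw [← _root_.map_zpow, ← ofAdd_zsmul, smul_eq_mul, mul_one]
    rw [MonoidHom.comp_apply, rho_of, _root_.map_mul, _root_.map_mul, _root_.map_zpow,
      _root_.map_zpow, Phi_cc, Phi_aa, hpow, hpow]
    rw [show Multiplicative.ofAdd (-n) = (Multiplicative.ofAdd n)⁻¹ from ofAdd_neg n]
    rw [← inl_aut, shiftAut_of]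
    simp
  exact DFunLike.congr_fun this u

lemma rho_eq_one_iff {u : FreeGroup ℤ} (h : rho u = 1) : u = 1 := by
  have h1 : (inl u : W) = 1 := by rw [← Phi_rho u, h, _root_.map_one]
  exact inl_injective (h1.trans (_root_.map_one (inl : FreeGroup ℤ →* W)).symm)

lemma rightHom_Phi (u : A) : rightHom (Phi u) = sigma u := by
  have : (rightHom.comp Phi : A →* Multiplicative ℤ) = sigma := by
    apply FreeGroup.ext_hom
    intro s
    cases s
    · show rightHom (Phi bb) = sigma bb
      rw [Phi_bb, _root_.map_mul]
      simp
    · show rightHom (Phi aa) = sigma aa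
      rw [Phi_aa]
      simp
  exact DFunLike.congr_fun this u

@[simp] lemma sigma_rho (u : FreeGroup ℤ) : sigma (rho u) = 1 := by
  rw [← rightHom_Phi, Phi_rho]
  simp

lemma mem_range_rho_of_sigma {u : A} (h : sigma u = 1) : ∃ z, rho z = u := by
  have h1 : rightHom (Phi u) = 1 := by rw [rightHom_Phi, h]
  have h2 : Phi u ∈ (inl : FreeGroup ℤ →* W).range := by
    rw [range_inl_eq_ker_rightHom]
    exact h1
  obtain ⟨z, hz⟩ := h2
  refine ⟨z, ?_⟩
  have := congrArg Psi hz
  rwa [Psi_inl, Psi_Phi] at this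

end StallingsAux


namespace StallingsAux

open SemidirectProduct
open scoped commutatorElement




lemma stallingsMap_apply (p q : A) : stallingsMap (p, q) = sigma p * sigma q := rfl

abbrev F3 := FreeGroup (Fin 3)

def xx : F3 := FreeGroup.of 0
def yy : F3 := FreeGroup.of 1
def tt : F3 := FreeGroup.of 2

def pii : F3 →* A × A :=
  FreeGroup.lift fun i => if i = 0 then (cc, 1) else if i = 1 then (1, cc) else (aa, aa⁻¹)

@[simp] lemma pii_xx : pii xx = (cc, 1) := by simp [pii, xx]
@[simp] lemma pii_yy : pii yy = (1, cc) := by simp [pii, yy]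
@[simp] lemma pii_tt : pii tt = (aa, aa⁻¹) := by
  simp [pii, tt]

def rel (j : ℤ) : F3 := ⁅xx, tt ^ j * yy * tt ^ (-j)⁆

def NN : Subgroup F3 := Subgroup.normalClosure (Set.range rel)

instance NN_normal : NN.Normal := Subgroup.normalClosure_normal

lemma pii_tzpow (e : ℤ) : pii (tt ^ e) = (aa ^ e, aa ^ (-e)) := by
  rw [map_zpow, pii_tt]
  ext
  · simp
  · simp [zpow_neg]

lemma pii_rel (j : ℤ) : pii (rel j) = 1 := by
  rw [rel, commutatorElement_def]
  simp only [map_mul, map_inv, pii_xx, pii_yy, pii_tzpow]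
  ext
  · simp
  · simp [mul_assoc]

lemma NN_le_ker : NN ≤ pii.ker := by
  apply Subgroup.normalClosure_le_normal
  rintro _ ⟨j, rfl⟩
  exact pii_rel j

abbrev QQ := F3 ⧸ NN

def mkQ : F3 →* QQ := QuotientGroup.mk' NN

def Xi : FreeGroup ℤ →* F3 := FreeGroup.lift fun n => tt ^ n * xx * tt ^ (-n)
def Eta : FreeGroup ℤ →* F3 := FreeGroup.lift fun m => tt ^ m * yy * tt ^ (-m)

@[simp] lemma Xi_of (n : ℤ) : Xi (FreeGroup.of n) = tt ^ n * xx * tt ^ (-n) := by simp [Xi]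
@[simp] lemma Eta_of (m : ℤ) : Eta (FreeGroup.of m) = tt ^ m * yy * tt ^ (-m) := by simp [Eta]

def xiQ : FreeGroup ℤ →* QQ := mkQ.comp Xi
def etaQ : FreeGroup ℤ →* QQ := mkQ.comp Eta

lemma commutator_eq_conj_rel (n m : ℤ) :
    ⁅tt ^ n * xx * tt ^ (-n), tt ^ m * yy * tt ^ (-m)⁆
      = tt ^ n * rel (m - n) * tt ^ (-n) := by
  rw [rel, commutatorElement_def, commutatorElement_def]
  have : tt ^ (m - n) = tt ^ m * tt ^ (-n) := by
    rw [← zpow_add]; ring_nf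
  rw [this]
  group

lemma conj_rel_mem (w : F3) (j : ℤ) : w * rel j * w⁻¹ ∈ NN := by
  exact NN_normal.conj_mem _ (Subgroup.subset_normalClosure ⟨j, rfl⟩) w

lemma commute_gen (n m : ℤ) :
    Commute (mkQ (tt ^ n * xx * tt ^ (-n))) (mkQ (tt ^ m * yy * tt ^ (-m))) := by
  rw [← commutatorElement_eq_one_iff_commute, ← map_commutatorElement,
    commutator_eq_conj_rel]
  rw [show (mkQ (tt ^ n * rel (m - n) * tt ^ (-n)) : QQ) = 1 ↔
      tt ^ n * rel (m - n) * tt ^ (-n) ∈ NN from QuotientGroup.eq_one_iff _]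
  have := conj_rel_mem (tt ^ n) (m - n)
  rwa [← zpow_neg] at this
  
lemma commute_xi_eta (u v : FreeGroup ℤ) : Commute (xiQ u) (etaQ v) := by
  have base : ∀ n v, Commute (xiQ (FreeGroup.of n)) (etaQ v) := by
    intro n v
    refine FreeGroup.induction_on
      (C := fun v => Commute (xiQ (FreeGroup.of n)) (etaQ v)) v ?_ ?_ ?_ ?_
    · show Commute (xiQ (FreeGroup.of n)) (etaQ 1)
      rw [map_one]; exact Commute.one_right _
    · intro m
      show Commute (xiQ (FreeGroup.of n)) (etaQ (FreeGroup.of m))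
      have h1 : xiQ (FreeGroup.of n) = mkQ (tt ^ n * xx * tt ^ (-n)) := by
        simp [xiQ]
      have h2 : etaQ (FreeGroup.of m) = mkQ (tt ^ m * yy * tt ^ (-m)) := by
        simp [etaQ]
      rw [h1, h2]; exact commute_gen n m
    · intro m h; rw [map_inv]; exact h.inv_right
    · intro p q hp hq; rw [map_mul]; exact hp.mul_right hq
  refine FreeGroup.induction_on
    (C := fun u => Commute (xiQ u) (etaQ v)) u ?_ ?_ ?_ ?_
  · show Commute (xiQ 1) (etaQ v)
    rw [map_one]; exact Commute.one_left _
  · intro n; exact base n v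
  · intro n h; rw [map_inv]; exact h.inv_left
  · intro p q hp hq; rw [map_mul]; exact hp.mul_left hq

def shE (e : ℤ) : FreeGroup ℤ ≃* FreeGroup ℤ := FreeGroup.freeGroupCongr (Equiv.addRight e)

@[simp] lemma shE_of (e n : ℤ) : shE e (FreeGroup.of n) = FreeGroup.of (n + e) := by
  simp [shE]

lemma conj_xiQ (e : ℤ) (u : FreeGroup ℤ) :
    (mkQ tt) ^ e * xiQ u * ((mkQ tt) ^ e)⁻¹ = xiQ (shE e u) := by
  have key : (MulAut.conj ((mkQ tt) ^ e)).toMonoidHom.comp xiQ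
      = xiQ.comp (shE e).toMonoidHom := by
    apply FreeGroup.ext_hom
    intro n
    simp only [MonoidHom.comp_apply, MulEquiv.coe_toMonoidHom, MulAut.conj_apply, shE_of]
    have h1 : xiQ (FreeGroup.of n) = mkQ (tt ^ n * xx * tt ^ (-n)) := by simp [xiQ]
    have h2 : xiQ (FreeGroup.of (n + e)) = mkQ (tt ^ (n + e) * xx * tt ^ (-(n + e))) := by
      simp [xiQ]
    rw [h1, h2, ← map_zpow mkQ, ← map_inv, ← map_mul, ← map_mul]
    congr 1
    group
  exact DFunLike.congr_fun key u

lemma conj_etaQ (e : ℤ) (v : FreeGroup ℤ) :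
    (mkQ tt) ^ e * etaQ v * ((mkQ tt) ^ e)⁻¹ = etaQ (shE e v) := by
  have key : (MulAut.conj ((mkQ tt) ^ e)).toMonoidHom.comp etaQ
      = etaQ.comp (shE e).toMonoidHom := by
    apply FreeGroup.ext_hom
    intro n
    simp only [MonoidHom.comp_apply, MulEquiv.coe_toMonoidHom, MulAut.conj_apply, shE_of]
    have h1 : etaQ (FreeGroup.of n) = mkQ (tt ^ n * yy * tt ^ (-n)) := by simp [etaQ]
    have h2 : etaQ (FreeGroup.of (n + e)) = mkQ (tt ^ (n + e) * yy * tt ^ (-(n + e))) := by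
      simp [etaQ]
    rw [h1, h2, ← map_zpow mkQ, ← map_inv, ← map_mul, ← map_mul]
    congr 1
    group
  exact DFunLike.congr_fun key v

lemma xiQ_mul_t (e : ℤ) (u : FreeGroup ℤ) :
    xiQ u * (mkQ tt) ^ e = (mkQ tt) ^ e * xiQ (shE (-e) u) := by
  have h := conj_xiQ (-e) u
  rw [zpow_neg, inv_inv] at h
  calc xiQ u * (mkQ tt) ^ e
      = (mkQ tt) ^ e * ((mkQ tt ^ e)⁻¹ * xiQ u * mkQ tt ^ e) := by group
    _ = (mkQ tt) ^ e * xiQ (shE (-e) u) := by rw [h]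

lemma etaQ_mul_t (e : ℤ) (v : FreeGroup ℤ) :
    etaQ v * (mkQ tt) ^ e = (mkQ tt) ^ e * etaQ (shE (-e) v) := by
  have h := conj_etaQ (-e) v
  rw [zpow_neg, inv_inv] at h
  calc etaQ v * (mkQ tt) ^ e
      = (mkQ tt) ^ e * ((mkQ tt ^ e)⁻¹ * etaQ v * mkQ tt ^ e) := by group
    _ = (mkQ tt) ^ e * etaQ (shE (-e) v) := by rw [h]

lemma normal_form (w : F3) :
    ∃ (e : ℤ) (u v : FreeGroup ℤ), mkQ w = (mkQ tt) ^ e * xiQ u * etaQ v := by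
  let S : Subgroup F3 :=
  { carrier := {w | ∃ (e : ℤ) (u v : FreeGroup ℤ), mkQ w = (mkQ tt) ^ e * xiQ u * etaQ v}
    one_mem' := ⟨0, 1, 1, by simp⟩
    mul_mem' := by
      rintro w₁ w₂ ⟨e₁, u₁, v₁, h₁⟩ ⟨e₂, u₂, v₂, h₂⟩
      refine ⟨e₁ + e₂, shE (-e₂) u₁ * u₂, shE (-e₂) v₁ * v₂, ?_⟩
      show mkQ (w₁ * w₂) = _
      rw [map_mul, h₁, h₂]
      calc mkQ tt ^ e₁ * xiQ u₁ * etaQ v₁ * (mkQ tt ^ e₂ * xiQ u₂ * etaQ v₂)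
          = mkQ tt ^ e₁ * xiQ u₁ * (etaQ v₁ * mkQ tt ^ e₂) * (xiQ u₂ * etaQ v₂) := by group
        _ = mkQ tt ^ e₁ * (xiQ u₁ * mkQ tt ^ e₂) * (etaQ (shE (-e₂) v₁) * xiQ u₂) * etaQ v₂ := by
              rw [etaQ_mul_t]; group
        _ = mkQ tt ^ e₁ * (mkQ tt ^ e₂ * xiQ (shE (-e₂) u₁)) *
              (xiQ u₂ * etaQ (shE (-e₂) v₁)) * etaQ v₂ := by
              rw [xiQ_mul_t, ← (commute_xi_eta u₂ (shE (-e₂) v₁)).eq]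
        _ = mkQ tt ^ (e₁ + e₂) * xiQ (shE (-e₂) u₁ * u₂) * etaQ (shE (-e₂) v₁ * v₂) := by
              rw [map_mul xiQ, map_mul etaQ, zpow_add]; group
    inv_mem' := by
      rintro w ⟨e, u, v, h⟩
      refine ⟨-e, shE e u⁻¹, shE e v⁻¹, ?_⟩
      show mkQ w⁻¹ = _
      rw [map_inv, h]
      calc (mkQ tt ^ e * xiQ u * etaQ v)⁻¹
          = etaQ v⁻¹ * (xiQ u⁻¹ * mkQ tt ^ (-e)) := by
            rw [map_inv xiQ, map_inv etaQ, zpow_neg]; group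
        _ = etaQ v⁻¹ * (mkQ tt ^ (-e) * xiQ (shE e u⁻¹)) := by
            rw [xiQ_mul_t (-e) u⁻¹, neg_neg]
        _ = (etaQ v⁻¹ * mkQ tt ^ (-e)) * xiQ (shE e u⁻¹) := by group
        _ = mkQ tt ^ (-e) * etaQ (shE e v⁻¹) * xiQ (shE e u⁻¹) := by
            rw [etaQ_mul_t (-e) v⁻¹, neg_neg]
        _ = mkQ tt ^ (-e) * xiQ (shE e u⁻¹) * etaQ (shE e v⁻¹) := by
            rw [mul_assoc, ← (commute_xi_eta (shE e u⁻¹) (shE e v⁻¹)).eq, ← mul_assoc] }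
  have hS : S = ⊤ := by
    rw [eq_top_iff, ← FreeGroup.closure_range_of, Subgroup.closure_le]
    rintro _ ⟨i, rfl⟩
    fin_cases i
    · exact ⟨0, FreeGroup.of 0, 1, by simp [xiQ, xx]⟩
    · exact ⟨0, 1, FreeGroup.of 0, by simp [etaQ, yy]⟩
    · exact ⟨1, 1, 1, by simp [tt]⟩
  have : w ∈ S := hS ▸ Subgroup.mem_top w
  exact this

def piiQ : QQ →* A × A := QuotientGroup.lift NN pii NN_le_ker

@[simp] lemma piiQ_mk (w : F3) : piiQ (mkQ w) = pii w := rfl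

def rho' : FreeGroup ℤ →* A := rho.comp (FreeGroup.freeGroupCongr (Equiv.neg ℤ)).toMonoidHom

@[simp] lemma rho'_of (m : ℤ) : rho' (FreeGroup.of m) = aa ^ (-m) * cc * aa ^ m := by
  simp [rho']

lemma pii_Xi (u : FreeGroup ℤ) : pii (Xi u) = (rho u, 1) := by
  have key : pii.comp Xi = (MonoidHom.inl A A).comp rho := by
    apply FreeGroup.ext_hom
    intro n
    simp only [MonoidHom.comp_apply, Xi_of, map_mul, pii_xx, pii_tzpow, rho_of,
      MonoidHom.inl_apply]
    ext
    · simp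
    · simp [zpow_neg]
  exact DFunLike.congr_fun key u

lemma pii_Eta (v : FreeGroup ℤ) : pii (Eta v) = (1, rho' v) := by
  have key : pii.comp Eta = (MonoidHom.inr A A).comp rho' := by
    apply FreeGroup.ext_hom
    intro m
    simp only [MonoidHom.comp_apply, Eta_of, map_mul, pii_yy, pii_tzpow, rho'_of,
      MonoidHom.inr_apply]
    ext
    · simp [zpow_neg]
    · simp
  exact DFunLike.congr_fun key v

lemma rho'_eq_one_iff {v : FreeGroup ℤ} (h : rho' v = 1) : v = 1 := by
  have h2 : (FreeGroup.freeGroupCongr (Equiv.neg ℤ)) v = 1 := rho_eq_one_iff h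
  have h3 := congrArg (FreeGroup.freeGroupCongr (Equiv.neg ℤ)).symm h2
  rw [MulEquiv.symm_apply_apply, map_one] at h3
  exact h3

@[simp] lemma sigma_zpow_aa (e : ℤ) : sigma (aa ^ e) = Multiplicative.ofAdd e := by
  rw [map_zpow, sigma_aa, ← ofAdd_zsmul, smul_eq_mul, mul_one]

lemma ker_pii : pii.ker = NN := by
  apply le_antisymm
  · intro w hw
    rw [MonoidHom.mem_ker] at hw
    obtain ⟨e, u, v, hnf⟩ := normal_form w
    have hpi : pii w = (aa ^ e * rho u, aa ^ (-e) * rho' v) := by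
      have : pii w = piiQ (mkQ w) := rfl
      rw [this, hnf, map_mul, map_mul, map_zpow]
      show (piiQ (mkQ tt)) ^ e * piiQ (mkQ (Xi u)) * piiQ (mkQ (Eta v)) = _
      rw [piiQ_mk, piiQ_mk, piiQ_mk, pii_tt, pii_Xi, pii_Eta]
      ext
      · simp
      · simp [zpow_neg]
    rw [hw] at hpi
    have h1 : (1 : A) = aa ^ e * rho u := congrArg Prod.fst hpi
    have h2 : (1 : A) = aa ^ (-e) * rho' v := congrArg Prod.snd hpi
    have he : e = 0 := by
      have := congrArg sigma h1
      simp only [map_one, map_mul, sigma_zpow_aa, sigma_rho, mul_one] at this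
      have := congrArg Multiplicative.toAdd this
      simpa using this.symm
    rw [he] at h1 h2
    simp only [zpow_zero, neg_zero, one_mul] at h1 h2
    have hu : u = 1 := rho_eq_one_iff h1.symm
    have hv : v = 1 := rho'_eq_one_iff h2.symm
    rw [hu, hv, he] at hnf
    simp only [zpow_zero, map_one, mul_one, one_mul] at hnf
    exact (QuotientGroup.eq_one_iff w).mp hnf
  · exact NN_le_ker

lemma range_pii : pii.range = stallingsMap.ker := by
  apply le_antisymm
  · rintro _ ⟨w, rfl⟩
    rw [MonoidHom.mem_ker]
    have key : stallingsMap.comp pii = 1 := by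
      apply FreeGroup.ext_hom
      intro i
      fin_cases i
      · show stallingsMap (pii xx) = 1
        rw [pii_xx]
        rw [stallingsMap_apply]
        simp
      · show stallingsMap (pii yy) = 1
        rw [pii_yy, stallingsMap_apply]
        simp
      · show stallingsMap (pii tt) = 1
        rw [pii_tt, stallingsMap_apply]
        simp
    exact DFunLike.congr_fun key w
  · rintro ⟨p, q⟩ hpq
    rw [MonoidHom.mem_ker, stallingsMap_apply] at hpq
    set e : ℤ := (sigma p).toAdd with he_def
    have hsp : sigma p = Multiplicative.ofAdd e := by simp [he_def]
    have hsq : sigma q = Multiplicative.ofAdd (-e) := by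
      have : sigma q = (sigma p)⁻¹ := eq_inv_of_mul_eq_one_left (by rw [mul_comm]; exact hpq)
      rw [this, hsp, ← ofAdd_neg]
    have hu : sigma (aa ^ (-e) * p) = 1 := by
      rw [map_mul, sigma_zpow_aa, hsp, ← ofAdd_add]
      simp
    have hv : sigma (aa ^ e * q) = 1 := by
      rw [map_mul, sigma_zpow_aa, hsq, ← ofAdd_add]
      simp
    obtain ⟨z₁, hz₁⟩ := mem_range_rho_of_sigma hu
    obtain ⟨z₂', hz₂'⟩ := mem_range_rho_of_sigma hv
    set z₂ := (FreeGroup.freeGroupCongr (Equiv.neg ℤ)) z₂' with hz₂_def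
    have hz₂ : rho' z₂ = aa ^ e * q := by
      rw [rho', MonoidHom.comp_apply, hz₂_def]
      have : (FreeGroup.freeGroupCongr (Equiv.neg ℤ)).toMonoidHom
          ((FreeGroup.freeGroupCongr (Equiv.neg ℤ)) z₂') = z₂' := by
        show (FreeGroup.freeGroupCongr (Equiv.neg ℤ))
          ((FreeGroup.freeGroupCongr (Equiv.neg ℤ)) z₂') = z₂'
        have hinv : (Equiv.neg ℤ).trans (Equiv.neg ℤ) = Equiv.refl ℤ := by
          ext x; simp
        rw [← MulEquiv.trans_apply, FreeGroup.freeGroupCongr_trans, hinv,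
          FreeGroup.freeGroupCongr_refl]
        rfl
      rw [this, hz₂']
    refine ⟨tt ^ e * Xi z₁ * Eta z₂, ?_⟩
    rw [map_mul, map_mul, pii_tzpow, pii_Xi, pii_Eta, hz₁, hz₂]
    ext
    · show aa ^ e * (aa ^ (-e) * p) * 1 = p
      rw [mul_one, ← mul_assoc, ← zpow_add]
      simp
    · show aa ^ (-e) * 1 * (aa ^ e * q) = q
      rw [mul_one, ← mul_assoc, ← zpow_add]
      simp

lemma ker_fg : stallingsMap.ker.FG := by
  rw [Subgroup.fg_iff]
  refine ⟨pii '' (Set.range FreeGroup.of), ?_, ?_⟩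
  · rw [← MonoidHom.map_closure, FreeGroup.closure_range_of, ← MonoidHom.range_eq_map]
    exact range_pii
  · exact (Set.finite_range _).image _


end StallingsAux

namespace StallingsAux



def sperm : Equiv.Perm (Fin 3) := Equiv.swap 0 1
def uperm : Equiv.Perm (Fin 3) := Equiv.swap 0 2

def pp (p : ℤ) (s : Equiv.Perm (Fin 3)) : Equiv.Perm (ℤ → Fin 3) :=
  Equiv.piCongrRight (fun i => if i = p then s else Equiv.refl _)

lemma pp_apply (p : ℤ) (s : Equiv.Perm (Fin 3)) (f : ℤ → Fin 3) (i : ℤ) :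
    pp p s f i = if i = p then s (f i) else f i := by
  simp only [pp, Equiv.piCongrRight_apply, Pi.map_apply]
  split_ifs <;> rfl

def TT : Equiv.Perm (ℤ → Fin 3) := Equiv.arrowCongr (Equiv.addRight (1 : ℤ)) (Equiv.refl _)

lemma TT_apply (f : ℤ → Fin 3) (i : ℤ) : TT f i = f (i - 1) := by
  simp [TT, Equiv.arrowCongr, Equiv.addRight]
  rfl

lemma TT_inv_apply (f : ℤ → Fin 3) (i : ℤ) : TT⁻¹ f i = f (i + 1) := by
  simp [TT, Equiv.arrowCongr, Equiv.addRight]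

lemma TT_conj (p : ℤ) (s : Equiv.Perm (Fin 3)) : TT * pp p s * TT⁻¹ = pp (p + 1) s := by
  apply Equiv.ext
  intro f
  funext i
  show TT ((pp p s) (TT⁻¹ f)) i = (pp (p + 1) s) f i
  rw [TT_apply, pp_apply, pp_apply]
  rw [TT_inv_apply, sub_add_cancel]
  by_cases h : i - 1 = p
  · rw [if_pos h, if_pos (by omega)]
  · rw [if_neg h, if_neg (by omega)]

lemma TT_conj_inv (p : ℤ) (s : Equiv.Perm (Fin 3)) : TT⁻¹ * pp p s * TT = pp (p - 1) s := by
  have := TT_conj (p - 1) s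
  rw [sub_add_cancel] at this
  rw [← this]
  group

lemma TT_zpow_conj (j p : ℤ) (s : Equiv.Perm (Fin 3)) :
    TT ^ j * pp p s * TT ^ (-j) = pp (p + j) s := by
  induction j using Int.induction_on with
  | zero => simp
  | succ k ih =>
    have harg : p + ((k : ℤ) + 1) = (p + (k : ℤ)) + 1 := by ring
    rw [harg, ← TT_conj (p + (k : ℤ)) s, ← ih]
    group
  | pred k ih =>
    have harg : p + (-(k : ℤ) - 1) = (p + -(k : ℤ)) - 1 := by ring
    rw [harg, ← TT_conj_inv (p + -(k : ℤ)) s, ← ih]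
    group

lemma pp_comm {p q : ℤ} (h : p ≠ q) (s u : Equiv.Perm (Fin 3)) :
    Commute (pp p s) (pp q u) := by
  have key : ∀ f, pp p s (pp q u f) = pp q u (pp p s f) := by
    intro f
    funext i
    rw [pp_apply, pp_apply, pp_apply, pp_apply]
    by_cases h1 : i = p <;> by_cases h2 : i = q
    · exact absurd (h1.symm.trans h2) h
    · simp [h1, h2, h]
    · have hqp : ¬ q = p := fun hh => h hh.symm
      simp [h1, h2, hqp]
    · simp [h1, h2]
  exact Equiv.ext fun f => by
    show (pp p s) ((pp q u) f) = (pp q u) ((pp p s) f)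
    exact key f

lemma pp_zero_ne : ¬ Commute (pp 0 sperm) (pp 0 uperm) := by
  intro h
  have h0 := congrFun (congrArg (fun e : Equiv.Perm (ℤ → Fin 3) => e ((fun _ => 0 : ℤ → Fin 3)))
    h.eq) 0
  revert h0
  show (pp 0 sperm) ((pp 0 uperm) fun _ => 0) 0 = (pp 0 uperm) ((pp 0 sperm) fun _ => 0) 0 → False
  rw [pp_apply, pp_apply, pp_apply, pp_apply]
  simp [sperm, uperm]
  decide


def fk (k : ℤ) : F3 →* Equiv.Perm (ℤ → Fin 3) :=
  FreeGroup.lift fun i => if i = 0 then pp 0 sperm else if i = 1 then pp (k + 1) uperm else TT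

@[simp] lemma fk_xx (k : ℤ) : fk k xx = pp 0 sperm := by simp [fk, xx]
@[simp] lemma fk_yy (k : ℤ) : fk k yy = pp (k + 1) uperm := by simp [fk, yy]
@[simp] lemma fk_tt (k : ℤ) : fk k tt = TT := by simp [fk, tt]

lemma fk_rel (k j : ℤ) (h : j ≠ -(k + 1)) : fk k (rel j) = 1 := by
  rw [rel, map_commutatorElement]
  have h2 : fk k (tt ^ j * yy * tt ^ (-j)) = pp (k + 1 + j) uperm := by
    rw [map_mul, map_mul, map_zpow, map_zpow, fk_tt, fk_yy, TT_zpow_conj]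
  rw [fk_xx, h2, commutatorElement_eq_one_iff_commute]
  exact pp_comm (by omega) _ _

lemma fk_rel_bad (k : ℤ) : fk k (rel (-(k + 1))) ≠ 1 := by
  rw [rel, map_commutatorElement]
  have h2 : fk k (tt ^ (-(k + 1)) * yy * tt ^ (-(-(k + 1)))) = pp 0 uperm := by
    rw [map_mul, map_mul, map_zpow, map_zpow, fk_tt, fk_yy, TT_zpow_conj]
    congr 1
    ring
  rw [fk_xx, h2, Ne, commutatorElement_eq_one_iff_commute]
  exact pp_zero_ne

lemma not_fp : ¬ IsFinitelyPresentedGroup stallingsMap.ker := by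
  intro hFP
  classical
  have hmem : ∀ w : F3, pii w ∈ stallingsMap.ker := by
    intro w; rw [← range_pii]; exact ⟨w, rfl⟩
  set π' : F3 →* stallingsMap.ker := pii.codRestrict stallingsMap.ker hmem with hπ'
  have hsurj : Function.Surjective π' := by
    rintro ⟨y, hy⟩
    rw [← range_pii] at hy
    obtain ⟨w, hw⟩ := hy
    exact ⟨w, Subtype.ext hw⟩
  have hkerπ' : π'.ker = Subgroup.normalClosure (Set.range rel) := by
    rw [hπ', MonoidHom.ker_codRestrict, ker_pii, NN]
  obtain ⟨T, hTsub, hT⟩ := exists_finset_normalClosure hFP π' hsurj hkerπ'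
  have hchoice : ∀ x : {x // x ∈ T}, ∃ j : ℤ, rel j = (x : F3) := fun x => hTsub x.2
  choose jf hjf using hchoice
  set kN : ℕ := ∑ x ∈ T.attach, (jf x).natAbs with hkN
  set k : ℤ := (kN : ℤ) with hk_def
  have hk : ∀ x : {x // x ∈ T}, ((jf x).natAbs : ℤ) ≤ k := by
    intro x
    rw [hk_def]
    exact_mod_cast Nat.cast_le.mpr
      (Finset.single_le_sum (f := fun x => (jf x).natAbs) (fun _ _ => Nat.zero_le _)
        (Finset.mem_attach T x))
  have hbad : ∀ x ∈ T, fk k x = 1 := by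
    intro x hx
    rw [show x = rel (jf ⟨x, hx⟩) from (hjf ⟨x, hx⟩).symm]
    apply fk_rel
    have := hk ⟨x, hx⟩
    have hk0 : 0 ≤ k := by rw [hk_def]; exact Int.ofNat_nonneg kN
    omega
  have hle : Subgroup.normalClosure (T : Set F3) ≤ (fk k).ker :=
    Subgroup.normalClosure_le_normal (fun x hx => hbad x hx)
  have hmem2 : rel (-(k + 1)) ∈ Subgroup.normalClosure (T : Set F3) := by
    rw [hT, hkerπ']
    exact Subgroup.subset_normalClosure ⟨-(k + 1), rfl⟩
  exact fk_rel_bad k (hle hmem2)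

end StallingsAux

/-- **Stallings–Bieri.** The kernel of `F₂ × F₂ → ℤ` sending each of the four standard
generators to `1` is finitely generated but not finitely presented. -/
theorem stallings_kernel_fg_not_fp :
    stallingsMap.ker.FG ∧ ¬ IsFinitelyPresentedGroup stallingsMap.ker :=
  ⟨StallingsAux.ker_fg, StallingsAux.not_fp⟩
end
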